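/- With single-peaked preferences and Bloc voting selecting k winners where k ≥ ⌈m/3⌉: if the winning set is an adjacent interval {C_i, ..., C_{i+k-1}} with m−2k+1 ≤ i ≤ k+1, then the winning set is Gehrlein-stable (every winner majority-defeats every non-winner). -/

import Mathlib

open Finset

/-- Each voter's preference is a strict total (linear) order on the candidates. -/
def StrictPrefs {m N : ℕ} (P : Fin N → Fin m → Fin m → Prop) : Prop :=
  ∀ v : Fin N, IsStrictTotalOrder (Fin m) (P v)

/-- Single-peakedness w.r.t. the left-right order on `Fin m`: for `i < j < k`,
no voter ranks both `C_i` and `C_k` above `C_j`. -/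
def SinglePeaked {m N : ℕ} (P : Fin N → Fin m → Fin m → Prop) : Prop :=
  ∀ (v : Fin N) (i j k : Fin m), i < j → j < k → ¬ (P v i j ∧ P v k j)

/-- Number of voters preferring `a` to `b`. -/
def prefCount {m N : ℕ} (P : Fin N → Fin m → Fin m → Prop)
    [∀ v a b, Decidable (P v a b)] (a b : Fin m) : ℕ :=
  (univ.filter fun v => P v a b).card

/-- `a` majority-defeats `b`: strictly more than `N/2` voters prefer `a` to `b`. -/
def Defeats {m N : ℕ} (P : Fin N → Fin m → Fin m → Prop)
    [∀ v a b, Decidable (P v a b)] (a b : Fin m) : Prop :=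
  2 * prefCount P a b > N

instance {m N : ℕ} (P : Fin N → Fin m → Fin m → Prop)
    [∀ v a b, Decidable (P v a b)] (a b : Fin m) : Decidable (Defeats P a b) :=
  inferInstanceAs (Decidable (2 * prefCount P a b > N))

/-- Voter `v` approves candidate `a` under Bloc voting with `k` winners:
`a` is among `v`'s top `k` candidates. -/
def Approves {m N : ℕ} (P : Fin N → Fin m → Fin m → Prop)
    [∀ v a b, Decidable (P v a b)] (k : ℕ) (v : Fin N) (a : Fin m) : Prop :=
  (univ.filter fun b => P v b a).card < k

instance {m N : ℕ} (P : Fin N → Fin m → Fin m → Prop)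
    [∀ v a b, Decidable (P v a b)] (k : ℕ) (v : Fin N) (a : Fin m) :
    Decidable (Approves P k v a) :=
  inferInstanceAs (Decidable ((univ.filter fun b => P v b a).card < k))

/-- Bloc score of candidate `a`: the number of voters who approve `a`. -/
def blocScore {m N : ℕ} (P : Fin N → Fin m → Fin m → Prop)
    [∀ v a b, Decidable (P v a b)] (k : ℕ) (a : Fin m) : ℕ :=
  (univ.filter fun v => Approves P k v a).card

/-- `W` is a winning set under Bloc voting with `k` winners (strict vote totals):
`W` has `k` members and each member has strictly more approvals than each non-member. -/
def IsWinningSet {m N : ℕ} (P : Fin N → Fin m → Fin m → Prop)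
    [∀ v a b, Decidable (P v a b)] (k : ℕ) (W : Finset (Fin m)) : Prop :=
  W.card = k ∧ ∀ w ∈ W, ∀ c ∉ W, blocScore P k w > blocScore P k c


section Aux

variable {m N : ℕ} {P : Fin N → Fin m → Fin m → Prop}

lemma sp_total (hP : StrictPrefs P) (v : Fin N) {x y : Fin m} (hne : x ≠ y)
    (h : ¬ P v y x) : P v x y := by
  by_contra h1
  exact hne ((hP v).trichotomous x y h1 h)

lemma sp_trans (hP : StrictPrefs P) (v : Fin N) {x y z : Fin m}
    (h1 : P v x y) (h2 : P v y z) : P v x z :=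
  (hP v).trans x y z h1 h2

lemma sp_asymm (hP : StrictPrefs P) (v : Fin N) {x y : Fin m}
    (h1 : P v x y) (h2 : P v y x) : False :=
  (hP v).irrefl x ((hP v).trans x y x h1 h2)

lemma sp_between (hP : StrictPrefs P) (hSP : SinglePeaked P) (v : Fin N)
    {x y j : Fin m} (h1 : x < j) (h2 : j < y) (h : P v x y) : P v j y := by
  by_contra hc
  have hyj : P v y j := sp_total hP v h2.ne' hc
  have hxj : ¬ P v x j := fun hxj => hSP v x j y h1 h2 ⟨hxj, hyj⟩
  have hjx : P v j x := sp_total hP v h1.ne' hxj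
  exact hc (sp_trans hP v hjx h)

lemma sp_between' (hP : StrictPrefs P) (hSP : SinglePeaked P) (v : Fin N)
    {x y j : Fin m} (h1 : y < j) (h2 : j < x) (h : P v x y) : P v j y := by
  by_contra hc
  have hyj : P v y j := sp_total hP v h1.ne hc
  have hxj : ¬ P v x j := fun hxj => hSP v y j x h1 h2 ⟨hyj, hxj⟩
  have hjx : P v j x := sp_total hP v h2.ne hxj
  exact hc (sp_trans hP v hjx h)

end Aux

/-- If `k ≥ ⌈m/3⌉` and the winning set is the adjacent interval
`{C_i, ..., C_{i+k-1}}` with `m - 2k + 1 ≤ i ≤ k + 1` (one-indexed; zero-indexed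
`m - 2k ≤ (a:ℕ) ≤ k` for the leftmost winner `a`), then it is Gehrlein-stable. -/
theorem central_adjacent_winning_set_gehrlein_stable {m N : ℕ}
    (P : Fin N → Fin m → Fin m → Prop) [∀ v a b, Decidable (P v a b)]
    (hP : StrictPrefs P) (hSP : SinglePeaked P) (hN : Odd N)
    (k : ℕ) (hk : (m + 2) / 3 ≤ k)
    (W : Finset (Fin m)) (hWwin : IsWinningSet P k W)
    (a : Fin m)
    (hWa : ∀ x : Fin m, x ∈ W ↔ (a : ℕ) ≤ (x : ℕ) ∧ (x : ℕ) < (a : ℕ) + k)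
    (hlo : m - 2 * k ≤ (a : ℕ)) (hhi : (a : ℕ) ≤ k) :
    ∀ w ∈ W, ∀ c ∉ W, Defeats P w c := by
    classical
  intro w hw c hc
  obtain ⟨hWk, hWs⟩ := hWwin
  have hwa := (hWa w).mp hw
  have hcn : ¬ ((a : ℕ) ≤ (c : ℕ) ∧ (c : ℕ) < (a : ℕ) + k) :=
    fun h => hc ((hWa c).mpr h)
  have hk1 : 1 ≤ k := by omega
  have ham : (a : ℕ) + k ≤ m := by
    by_contra hcon
    push_neg at hcon
    have hsub : W ⊆ Finset.Ici a := by
      intro x hx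
      have hx1 := ((hWa x).mp hx).1
      exact Finset.mem_Ici.mpr (Fin.le_def.mpr hx1)
    have hcard := Finset.card_le_card hsub
    rw [Fin.card_Ici, hWk] at hcard
    have := a.isLt
    omega
  by_contra hdef
  unfold Defeats at hdef
  push_neg at hdef
  have hwc : w ≠ c := fun h => hc (h ▸ hw)
  have hsum : prefCount P w c + prefCount P c w = N := by
    have hfil := Finset.card_filter_add_card_filter_not
      (s := (univ : Finset (Fin N))) (p := fun v => P v w c)
    have heq : (univ.filter fun v => ¬ P v w c) = (univ.filter fun v => P v c w) := by
      ext v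
      simp only [mem_filter, mem_univ, true_and]
      constructor
      · intro h
        exact sp_total hP v (Ne.symm hwc) h
      · intro h h2
        exact sp_asymm hP v h h2
    rw [heq] at hfil
    unfold prefCount
    simpa using hfil
  obtain ⟨t, ht⟩ := hN
  have hsN : N + 1 ≤ 2 * prefCount P c w := by omega
  have hSsub : ∀ A : Fin m, (∀ v, P v c w → Approves P k v A) →
      prefCount P c w ≤ blocScore P k A := by
    intro A hA
    unfold blocScore prefCount
    apply Finset.card_le_card
    intro v hv
    simp only [mem_filter, mem_univ, true_and] at hv ⊢
    exact hA v hv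
  have hub : ∀ A : Fin m, (∀ v, P v c w → ¬ Approves P k v A) →
      blocScore P k A + prefCount P c w ≤ N := by
    intro A hA
    have hdisj : Disjoint (univ.filter fun v => Approves P k v A)
        (univ.filter fun v => P v c w) := by
      rw [Finset.disjoint_left]
      intro v h1 h2
      simp only [mem_filter, mem_univ, true_and] at h1 h2
      exact hA v h2 h1
    have hcu := Finset.card_union_of_disjoint hdisj
    have hle : ((univ.filter fun v => Approves P k v A) ∪
        (univ.filter fun v => P v c w)).card ≤ N := by
      have := Finset.card_le_card (Finset.subset_univ
        ((univ.filter fun v => Approves P k v A) ∪ (univ.filter fun v => P v c w)))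
      simpa using this
    unfold blocScore prefCount
    omega
  rcases lt_or_ge (c : ℕ) (a : ℕ) with hca | hac
  · -- c is to the left of the winning interval
    have ha1 : 1 ≤ (a : ℕ) := by omega
    have hd : Fin m := a
    let d : Fin m := ⟨(a : ℕ) - 1, by have := a.isLt; omega⟩
    let r : Fin m := ⟨(a : ℕ) + k - 1, by omega⟩
    have hdval : (d : ℕ) = (a : ℕ) - 1 := rfl
    have hrval : (r : ℕ) = (a : ℕ) + k - 1 := rfl
    have hdW : d ∉ W := by
      intro h
      have := ((hWa d).mp h).1
      omega
    have hrW : r ∈ W := (hWa r).mpr (by omega)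
    have hcw_lt : c < w := by
      rw [Fin.lt_def]; omega
    have hwr_le : (w : ℕ) ≤ (r : ℕ) := by omega
    have claim2 : ∀ v, P v c w → ¬ Approves P k v r := by
      intro v hv happ
      have hcr : P v c r := by
        by_cases hwr : w = r
        · exact hwr ▸ hv
        · have hwr' : w < r := by
            rw [Fin.lt_def]
            have : (w : ℕ) ≠ (r : ℕ) := fun h => hwr (Fin.ext h)
            omega
          have hnrw : ¬ P v r w := fun h => hSP v c w r hcw_lt hwr' ⟨hv, h⟩
          exact sp_trans hP v hv (sp_total hP v hwr hnrw)
      have hsub2 : Finset.Ico c r ⊆ univ.filter (fun b => P v b r) := by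
        intro j hj
        rw [Finset.mem_Ico] at hj
        simp only [mem_filter, mem_univ, true_and]
        rcases eq_or_lt_of_le hj.1 with h | h
        · exact h ▸ hcr
        · exact sp_between hP hSP v h hj.2 hcr
      have hcard2 := Finset.card_le_card hsub2
      rw [Fin.card_Ico] at hcard2
      unfold Approves at happ
      omega
    have claim1 : ∀ v, P v c w → Approves P k v d := by
      intro v hv
      unfold Approves
      have hdw : d < w := by rw [Fin.lt_def]; omega
      by_cases hex : ∃ y : Fin m, d < y ∧ P v y d
      · obtain ⟨y, hdy, hyd⟩ := hex
        have hsub : univ.filter (fun b => P v b d) ⊆ Finset.Ioo d r := by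
          intro x hx
          simp only [mem_filter, mem_univ, true_and] at hx
          rw [Finset.mem_Ioo]
          constructor
          · rcases lt_trichotomy x d with h | h | h
            · exact absurd ⟨hx, hyd⟩ (hSP v x d y h hdy)
            · exact absurd (h ▸ hx) ((hP v).irrefl d)
            · exact h
          · by_contra hxr
            push_neg at hxr
            have hrx : (r : ℕ) ≤ (x : ℕ) := Fin.le_def.mp hxr
            have hwd : P v w d := by
              by_cases hwx : w = x
              · exact hwx ▸ hx
              · have hwx' : w < x := by
                  rw [Fin.lt_def]
                  have : (w : ℕ) ≠ (x : ℕ) := fun h => hwx (Fin.ext h)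
                  omega
                exact sp_between' hP hSP v hdw hwx' hx
            by_cases hcd : c = d
            · exact sp_asymm hP v hv (hcd ▸ hwd)
            · have hcd' : c < d := by
                rw [Fin.lt_def]
                have : (c : ℕ) ≠ (d : ℕ) := fun h => hcd (Fin.ext h)
                omega
              exact sp_asymm hP v (sp_between hP hSP v hcd' hdw hv) hwd
        have hcard := Finset.card_le_card hsub
        rw [Fin.card_Ioo] at hcard
        omega
      · push_neg at hex
        have hsub : univ.filter (fun b => P v b d) ⊆ Finset.Iio d := by
          intro x hx
          simp only [mem_filter, mem_univ, true_and] at hx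
          rw [Finset.mem_Iio]
          rcases lt_trichotomy x d with h | h | h
          · exact h
          · exact absurd (h ▸ hx) ((hP v).irrefl d)
          · exact absurd hx (hex x h)
        have hcard := Finset.card_le_card hsub
        rw [Fin.card_Iio] at hcard
        omega
    have h1 := hSsub d claim1
    have h2 := hub r claim2
    have h3 := hWs r hrW d hdW
    omega
  · -- c is to the right of the winning interval
    have hakc : (a : ℕ) + k ≤ (c : ℕ) := by omega
    have hcm := c.isLt
    let d : Fin m := ⟨(a : ℕ) + k, by omega⟩
    have hdval : (d : ℕ) = (a : ℕ) + k := rfl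
    have hdW : d ∉ W := by
      intro h
      have := ((hWa d).mp h).2
      omega
    have haW : a ∈ W := (hWa a).mpr (by omega)
    have hwd : w < d := by rw [Fin.lt_def]; omega
    have hwc_lt : w < c := by rw [Fin.lt_def]; omega
    have claim2' : ∀ v, P v c w → ¬ Approves P k v a := by
      intro v hv happ
      have hca' : P v c a := by
        by_cases haw : a = w
        · exact haw ▸ hv
        · have haw' : a < w := by
            rw [Fin.lt_def]
            have : (a : ℕ) ≠ (w : ℕ) := fun h => haw (Fin.ext h)
            omega
          have hnaw : ¬ P v a w := fun h => hSP v a w c haw' hwc_lt ⟨h, hv⟩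
          exact sp_trans hP v hv (sp_total hP v (Ne.symm haw) hnaw)
      have hsub : Finset.Ioc a c ⊆ univ.filter (fun b => P v b a) := by
        intro j hj
        rw [Finset.mem_Ioc] at hj
        simp only [mem_filter, mem_univ, true_and]
        rcases eq_or_lt_of_le hj.2 with h | h
        · exact h ▸ hca'
        · exact sp_between' hP hSP v hj.1 h hca'
      have hcard := Finset.card_le_card hsub
      rw [Fin.card_Ioc] at hcard
      unfold Approves at happ
      omega
    have claim1' : ∀ v, P v c w → Approves P k v d := by
      intro v hv
      unfold Approves
      by_cases hex : ∃ y : Fin m, y < d ∧ P v y d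
      · obtain ⟨y, hyd, hPyd⟩ := hex
        have hsub : univ.filter (fun b => P v b d) ⊆ Finset.Ioo a d := by
          intro x hx
          simp only [mem_filter, mem_univ, true_and] at hx
          rw [Finset.mem_Ioo]
          constructor
          · by_contra hax
            push_neg at hax
            have hxa : (x : ℕ) ≤ (a : ℕ) := Fin.le_def.mp hax
            have hPwd : P v w d := by
              by_cases hwx : w = x
              · exact hwx ▸ hx
              · have hxw : x < w := by
                  rw [Fin.lt_def]
                  have : (w : ℕ) ≠ (x : ℕ) := fun h => hwx (Fin.ext h)
                  omega
                exact sp_between hP hSP v hxw hwd hx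
            by_cases hdc : d = c
            · exact sp_asymm hP v hv (hdc ▸ hPwd)
            · have hdc' : d < c := by
                rw [Fin.lt_def]
                have : (d : ℕ) ≠ (c : ℕ) := fun h => hdc (Fin.ext h)
                omega
              exact sp_asymm hP v (sp_between' hP hSP v hwd hdc' hv) hPwd
          · rcases lt_trichotomy x d with h | h | h
            · exact h
            · exact absurd (h ▸ hx) ((hP v).irrefl d)
            · exact absurd ⟨hPyd, hx⟩ (hSP v y d x hyd h)
        have hcard := Finset.card_le_card hsub
        rw [Fin.card_Ioo] at hcard
        omega
      · push_neg at hex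
        have hsub : univ.filter (fun b => P v b d) ⊆ Finset.Ioi d := by
          intro x hx
          simp only [mem_filter, mem_univ, true_and] at hx
          rw [Finset.mem_Ioi]
          rcases lt_trichotomy x d with h | h | h
          · exact absurd hx (hex x h)
          · exact absurd (h ▸ hx) ((hP v).irrefl d)
          · exact h
        have hcard := Finset.card_le_card hsub
        rw [Fin.card_Ioi] at hcard
        omega
    have h1 := hSsub d claim1'
    have h2 := hub a claim2'
    have h3 := hWs a haW d hdW
    omega
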